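/- Let (Ω, 𝓕, μ) be a probability space, 𝒳 a measurable space, 𝒴 a finite set with discrete σ-algebra, H a separable real Hilbert space, ψ : 𝒴 → H, X : Ω → 𝒳 and Y : Ω → 𝒴 measurable, and h* : 𝒳 → H measurable such that h* ∘ X is a version of the conditional expectation of ψ ∘ Y given the σ-algebra generated by X. Let P : H → H be a bounded linear operator and c ∈ [0,1]. Then: E‖Ph*(X) − h*(X)‖² ≤ c·E‖Ph*(X) − h*(X)‖² + (1−c)·E‖Pψ(Y) − ψ(Y)‖². -/

import Mathlib

open MeasureTheory
open scoped RealInnerProductSpace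

private lemma condexp_clm_comm_aux {Ω : Type*} {m m0 : MeasurableSpace Ω} (hm : m ≤ m0)
    {μ : Measure Ω} [IsFiniteMeasure μ]
    {H H' : Type*} [NormedAddCommGroup H] [NormedSpace ℝ H] [CompleteSpace H]
    [NormedAddCommGroup H'] [NormedSpace ℝ H'] [CompleteSpace H']
    (T : H →L[ℝ] H') {f : Ω → H} (hf : Integrable f μ) :
    (fun ω => T ((μ[f|m]) ω)) =ᵐ[μ] μ[fun ω => T (f ω)|m] := by
  refine ae_eq_condExp_of_forall_setIntegral_eq hm (T.integrable_comp hf) ?_ ?_ ?_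
  · intro s _ _
    exact (T.integrable_comp integrable_condExp).integrableOn
  · intro s hs _
    rw [T.integral_comp_comm integrable_condExp.integrableOn,
      setIntegral_condExp hm hf hs, ← T.integral_comp_comm hf.integrableOn]
  · exact (T.continuous.comp_stronglyMeasurable stronglyMeasurable_condExp).aestronglyMeasurable

/-- **Jensen bound on the reconstruction error (Lemma 2 of the paper).**
With `h*(x) = E[ψ(Y) | X = x]`, a bounded linear `P : H → H` and `c ∈ [0,1]`,
`E‖Ph*(X) − h*(X)‖² ≤ c·E‖Ph*(X) − h*(X)‖² + (1−c)·E‖Pψ(Y) − ψ(Y)‖²`. -/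
theorem reconstruction_error_jensen_bound
    {Ω : Type*} [MeasurableSpace Ω] (μ : Measure Ω) [IsProbabilityMeasure μ]
    {X : Type*} [MeasurableSpace X]
    {Y : Type*} [Fintype Y] [MeasurableSpace Y] [DiscreteMeasurableSpace Y]
    {H : Type*} [NormedAddCommGroup H] [InnerProductSpace ℝ H] [CompleteSpace H]
    [SecondCountableTopology H] [MeasurableSpace H] [BorelSpace H]
    (ψ : Y → H)
    (Xv : Ω → X) (Yv : Ω → Y) (hXv : Measurable Xv) (hYv : Measurable Yv)
    (hstar : X → H) (hstar_meas : Measurable hstar)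
    (hstar_condexp : (fun ω => hstar (Xv ω)) =ᵐ[μ]
      μ[fun ω => ψ (Yv ω)|MeasurableSpace.comap Xv inferInstance])
    (P : H →L[ℝ] H) (c : ℝ) (hc : c ∈ Set.Icc (0 : ℝ) 1) :
    ∫ ω, ‖P (hstar (Xv ω)) - hstar (Xv ω)‖ ^ 2 ∂μ ≤
      c * (∫ ω, ‖P (hstar (Xv ω)) - hstar (Xv ω)‖ ^ 2 ∂μ) +
        (1 - c) * ∫ ω, ‖P (ψ (Yv ω)) - ψ (Yv ω)‖ ^ 2 ∂μ := by
  obtain ⟨hc0, hc1⟩ := hc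
  have hm : MeasurableSpace.comap Xv ‹MeasurableSpace X› ≤ ‹MeasurableSpace Ω› :=
    measurable_iff_comap_le.mp hXv
  set T : H →L[ℝ] H := P - ContinuousLinearMap.id ℝ H with hT_def
  have hT : ∀ x : H, T x = P x - x := fun x => rfl
  set f : Ω → H := fun ω => ψ (Yv ω) with hf_def
  set Qg : Ω → H := fun ω => T (f ω) with hQg_def
  have hf_meas : Measurable f := (Measurable.of_discrete (f := ψ)).comp hYv
  have hQg_meas : Measurable Qg := T.continuous.measurable.comp hf_meas
  obtain ⟨C, hC⟩ := Finite.exists_le fun y : Y => ‖T (ψ y)‖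
  have hCf : ∃ D, ∀ y : Y, ‖ψ y‖ ≤ D := Finite.exists_le _
  obtain ⟨D, hD⟩ := hCf
  have hQg_mem : MemLp Qg 2 μ :=
    MemLp.of_bound hQg_meas.aestronglyMeasurable C (Filter.Eventually.of_forall fun ω => hC _)
  have hf_int : Integrable f μ :=
    (MemLp.of_bound hf_meas.aestronglyMeasurable D
      (Filter.Eventually.of_forall fun ω => hD _)).integrable le_rfl
  have hQg_int : Integrable Qg μ := hQg_mem.integrable one_le_two
  set F : Lp H 2 μ := MemLp.toLp Qg hQg_mem with hF_def
  have hF : (F : Ω → H) =ᵐ[μ] Qg := hQg_mem.coeFn_toLp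
  -- condexpL2 agrees a.e. with condexp
  have hGcond : ((condExpL2 H ℝ hm F : Lp H 2 μ) : Ω → H) =ᵐ[μ] μ[Qg|MeasurableSpace.comap Xv ‹MeasurableSpace X›] := by
    refine ae_eq_condExp_of_forall_setIntegral_eq hm hQg_int ?_ ?_ ?_
    · intro s _ hμs
      exact integrableOn_condExpL2_of_measure_ne_top hm hμs.ne F
    · intro s hs hμs
      rw [integral_condExpL2_eq hm F hs hμs.ne]
      exact setIntegral_congr_ae (hm s hs) (hF.mono fun x hx _ => hx)
    · exact aestronglyMeasurable_condExpL2 hm F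
  -- condexp of Qg equals T applied to hstar ∘ Xv
  have h1 : (fun ω => T ((μ[f|MeasurableSpace.comap Xv ‹MeasurableSpace X›]) ω)) =ᵐ[μ] μ[Qg|MeasurableSpace.comap Xv ‹MeasurableSpace X›] := condexp_clm_comm_aux hm T hf_int
  have h2 : (fun ω => T (hstar (Xv ω))) =ᵐ[μ] fun ω => T ((μ[f|MeasurableSpace.comap Xv ‹MeasurableSpace X›]) ω) :=
    hstar_condexp.fun_comp T
  have hQh_eq : (fun ω => T (hstar (Xv ω))) =ᵐ[μ]
      ((condExpL2 H ℝ hm F : Lp H 2 μ) : Ω → H) := (h2.trans h1).trans hGcond.symm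
  -- L2 norm identity
  have key : ∀ φ : Lp H 2 μ, ∫ ω, ‖φ ω‖ ^ 2 ∂μ = ‖φ‖ ^ 2 := by
    intro φ
    rw [show ‖φ‖ ^ 2 = ⟪φ, φ⟫ from (real_inner_self_eq_norm_sq φ).symm,
      MeasureTheory.L2.inner_def]
    exact integral_congr_ae (Filter.Eventually.of_forall fun ω =>
      (real_inner_self_eq_norm_sq _).symm)
  have hA : ∫ ω, ‖P (hstar (Xv ω)) - hstar (Xv ω)‖ ^ 2 ∂μ
      = ‖(condExpL2 H ℝ hm F : Lp H 2 μ)‖ ^ 2 := by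
    rw [← key]
    exact integral_congr_ae (hQh_eq.mono fun ω hω => congrArg (fun v : H => ‖v‖ ^ 2) hω)
  have hB : ∫ ω, ‖P (ψ (Yv ω)) - ψ (Yv ω)‖ ^ 2 ∂μ = ‖F‖ ^ 2 := by
    rw [← key]
    exact integral_congr_ae (hF.mono fun ω hω =>
      (congrArg (fun v : H => ‖v‖ ^ 2) hω).symm)
  have hnorm : ‖(condExpL2 H ℝ hm F : Lp H 2 μ)‖ ≤ ‖F‖ := norm_condExpL2_coe_le hm F
  have hAB : ∫ ω, ‖P (hstar (Xv ω)) - hstar (Xv ω)‖ ^ 2 ∂μ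
      ≤ ∫ ω, ‖P (ψ (Yv ω)) - ψ (Yv ω)‖ ^ 2 ∂μ := by
    rw [hA, hB]
    exact pow_le_pow_left₀ (norm_nonneg _) hnorm 2
  nlinarith [hAB]
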